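/- arXiv:2605.21570 — 2 statements merged into one kernel-verified Lean document; each statement's English description precedes it below -/
import Mathlib

section
/- Let d ≥ 1, let 0 = A₀ < A₁ ≤ A₂ ≤ ... ≤ A_d be real numbers, and let B_i be real numbers with 0 ≤ B_i ≤ A_i − A_{i−1} for all 1 ≤ i ≤ d. Then (A₁ − Σ_{i=1}^d B_i)/A₁ ≤ (A₁ − B₁)/(A₁ + Σ_{i=2}^d B_i) ≤ ∏_{i=1}^d (A_i − B_i)/A_i ≤ (A_d − Σ_{i=1}^d B_i)/A_d ≤ (A_d − B₁)/(A_d + Σ_{i=2}^d B_i). -/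
/-- Bounds for almost-telescopic products. -/
theorem stmt_1 (d : ℕ) (hd : 1 ≤ d) (A B : ℕ → ℝ)
    (hA0 : A 0 = 0) (hA01 : A 0 < A 1)
    (hAmono : ∀ i, 1 ≤ i → i < d → A i ≤ A (i + 1))
    (hB0 : ∀ i, 1 ≤ i → i ≤ d → 0 ≤ B i)
    (hB1 : ∀ i, 1 ≤ i → i ≤ d → B i ≤ A i - A (i - 1)) :
    (A 1 - ∑ i ∈ Finset.Icc 1 d, B i) / A 1
      ≤ (A 1 - B 1) / (A 1 + ∑ i ∈ Finset.Icc 2 d, B i) ∧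
    (A 1 - B 1) / (A 1 + ∑ i ∈ Finset.Icc 2 d, B i)
      ≤ ∏ i ∈ Finset.Icc 1 d, (A i - B i) / A i ∧
    (∏ i ∈ Finset.Icc 1 d, (A i - B i) / A i)
      ≤ (A d - ∑ i ∈ Finset.Icc 1 d, B i) / A d ∧
    (A d - ∑ i ∈ Finset.Icc 1 d, B i) / A d
      ≤ (A d - B 1) / (A d + ∑ i ∈ Finset.Icc 2 d, B i) := by
  have hA1 : 0 < A 1 := by rw [hA0] at hA01; exact hA01
  have hApos : ∀ i, 1 ≤ i → i ≤ d → 0 < A i := by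
    intro i hi
    induction i, hi using Nat.le_induction with
    | base => intro _; exact hA1
    | succ n hn ih =>
      intro hnd
      have h1 := hAmono n hn (by omega)
      have h2 := ih (by omega)
      linarith
  have hAnn : ∀ i, i ≤ d → 0 ≤ A i := by
    intro i hi
    rcases Nat.eq_zero_or_pos i with h | h
    · rw [h, hA0]
    · exact (hApos i h hi).le
  have hB1' : B 1 ≤ A 1 := by
    have := hB1 1 le_rfl hd
    simpa [hA0] using this
  have hB1nn : 0 ≤ B 1 := hB0 1 le_rfl hd
  have hTnn : ∀ k, k ≤ d → 0 ≤ ∑ i ∈ Finset.Icc 2 k, B i := by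
    intro k hk
    apply Finset.sum_nonneg
    intro i hi
    rw [Finset.mem_Icc] at hi
    exact hB0 i (by omega) (by omega)
  have hSnn : ∀ k, k ≤ d → 0 ≤ ∑ i ∈ Finset.Icc 1 k, B i := by
    intro k hk
    apply Finset.sum_nonneg
    intro i hi
    rw [Finset.mem_Icc] at hi
    exact hB0 i (by omega) (by omega)
  have htel : ∀ k, 1 ≤ k → k ≤ d → A 1 + ∑ i ∈ Finset.Icc 2 k, B i ≤ A k := by
    intro k hk
    induction k, hk using Nat.le_induction with
    | base => intro _; simp
    | succ n hn ih =>
      intro hnd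
      rw [Finset.sum_Icc_succ_top (by omega : 2 ≤ n + 1)]
      have h1 := ih (by omega)
      have h2 := hB1 (n + 1) (by omega) hnd
      have h3 : n + 1 - 1 = n := by omega
      rw [h3] at h2
      linarith
  have hfacnn : ∀ i, 1 ≤ i → i ≤ d → 0 ≤ (A i - B i) / A i := by
    intro i h1 h2
    apply div_nonneg _ (hAnn i h2)
    have hb := hB1 i h1 h2
    have ha := hAnn (i - 1) (by omega)
    linarith
  have hsplit : ∀ k, 1 ≤ k →
      ∑ i ∈ Finset.Icc 1 k, B i = B 1 + ∑ i ∈ Finset.Icc 2 k, B i := by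
    intro k hk
    have h : Finset.Icc 1 k = insert 1 (Finset.Icc 2 k) := by
      ext a
      simp only [Finset.mem_Icc, Finset.mem_insert]
      omega
    rw [h, Finset.sum_insert (by simp)]
  have claim2 : ∀ k, 1 ≤ k → k ≤ d →
      (A 1 - B 1) / (A 1 + ∑ i ∈ Finset.Icc 2 k, B i)
        ≤ ∏ i ∈ Finset.Icc 1 k, (A i - B i) / A i := by
    intro k hk
    induction k, hk using Nat.le_induction with
    | base => intro _; simp
    | succ n hn ih =>
      intro hnd
      rw [Finset.prod_Icc_succ_top (by omega : 1 ≤ n + 1),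
        Finset.sum_Icc_succ_top (by omega : 2 ≤ n + 1)]
      have hT := hTnn n (by omega)
      have hBn := hB0 (n + 1) (by omega) hnd
      have hAn1 := hApos (n + 1) (by omega) hnd
      have hA1B1 : 0 ≤ A 1 - B 1 := by linarith
      have htel' := htel (n + 1) (by omega) hnd
      rw [Finset.sum_Icc_succ_top (by omega : 2 ≤ n + 1)] at htel'
      have key : (A 1 - B 1) / (A 1 + (∑ i ∈ Finset.Icc 2 n, B i + B (n + 1)))
          ≤ ((A 1 - B 1) / (A 1 + ∑ i ∈ Finset.Icc 2 n, B i))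
            * ((A (n + 1) - B (n + 1)) / A (n + 1)) := by
        rw [div_mul_div_comm, div_le_div_iff₀ (by linarith)
          (mul_pos (by linarith) hAn1)]
        nlinarith [mul_nonneg (mul_nonneg hA1B1 hBn)
          (by linarith : (0:ℝ) ≤ A (n + 1) - (A 1 + (∑ i ∈ Finset.Icc 2 n, B i + B (n + 1))))]
      calc (A 1 - B 1) / (A 1 + (∑ i ∈ Finset.Icc 2 n, B i + B (n + 1)))
          ≤ ((A 1 - B 1) / (A 1 + ∑ i ∈ Finset.Icc 2 n, B i))
            * ((A (n + 1) - B (n + 1)) / A (n + 1)) := key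
        _ ≤ (∏ i ∈ Finset.Icc 1 n, (A i - B i) / A i)
            * ((A (n + 1) - B (n + 1)) / A (n + 1)) :=
          mul_le_mul_of_nonneg_right (ih (by omega)) (hfacnn (n + 1) (by omega) hnd)
  have claim3 : ∀ k, 1 ≤ k → k ≤ d →
      ∏ i ∈ Finset.Icc 1 k, (A i - B i) / A i
        ≤ (A k - ∑ i ∈ Finset.Icc 1 k, B i) / A k := by
    intro k hk
    induction k, hk using Nat.le_induction with
    | base => intro _; simp
    | succ n hn ih =>
      intro hnd
      rw [Finset.prod_Icc_succ_top (by omega : 1 ≤ n + 1),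
        Finset.sum_Icc_succ_top (by omega : 1 ≤ n + 1)]
      have hSn := hSnn n (by omega)
      have hBn := hB0 (n + 1) (by omega) hnd
      have hAn := hApos n hn (by omega)
      have hAn1 := hApos (n + 1) (by omega) hnd
      have hgap : B (n + 1) ≤ A (n + 1) - A n := by
        have h2 := hB1 (n + 1) (by omega) hnd
        have h3 : n + 1 - 1 = n := by omega
        rwa [h3] at h2
      have step2 : ((A n - ∑ i ∈ Finset.Icc 1 n, B i) / A n)
            * ((A (n + 1) - B (n + 1)) / A (n + 1))
          ≤ (A (n + 1) - (∑ i ∈ Finset.Icc 1 n, B i + B (n + 1))) / A (n + 1) := by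
        rw [div_mul_div_comm, div_le_div_iff₀ (mul_pos hAn hAn1) hAn1]
        nlinarith [mul_nonneg (mul_nonneg hSn
          (by linarith : (0:ℝ) ≤ A (n + 1) - A n - B (n + 1))) hAn1.le]
      calc (∏ i ∈ Finset.Icc 1 n, (A i - B i) / A i)
            * ((A (n + 1) - B (n + 1)) / A (n + 1))
          ≤ ((A n - ∑ i ∈ Finset.Icc 1 n, B i) / A n)
            * ((A (n + 1) - B (n + 1)) / A (n + 1)) :=
          mul_le_mul_of_nonneg_right (ih (by omega)) (hfacnn (n + 1) (by omega) hnd)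
        _ ≤ (A (n + 1) - (∑ i ∈ Finset.Icc 1 n, B i + B (n + 1))) / A (n + 1) := step2
  have hT := hTnn d le_rfl
  have hAd := hApos d hd le_rfl
  refine ⟨?_, claim2 d hd le_rfl, claim3 d hd le_rfl, ?_⟩
  · rw [hsplit d hd, div_le_div_iff₀ hA1 (by linarith)]
    nlinarith [mul_nonneg hT hB1nn, sq_nonneg (∑ i ∈ Finset.Icc 2 d, B i)]
  · rw [hsplit d hd, div_le_div_iff₀ hAd (by linarith)]
    nlinarith [mul_nonneg hT hB1nn, sq_nonneg (∑ i ∈ Finset.Icc 2 d, B i)]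
end

section
/- Let r_1, ..., r_m ∈ [0,1) and let X_1, ..., X_m be independent geometric random variables where X_i takes value x ∈ ℤ_{≥0} with probability (1−r_i) r_i^x. Set X = Σ_i X_i and a_i = r_i/(1−r_i). Then for every nonnegative integer M, the expectation of the falling factorial satisfies E[X(X−1)···(X−M+1)] = Σ_{(m_1,...,m_m): Σ m_i = M} (M choose m_1,...,m_m) ∏_i m_i! a_i^{m_i} ≤ M! (Σ_i a_i)^M. -/
open Finset

lemma prod_range_cast_sub (n M : ℕ) :
    ∏ j ∈ Finset.range M, ((n : ℝ) - (j : ℝ)) = (n.descFactorial M : ℝ) := by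
  induction M with
  | zero => simp
  | succ M ih =>
    rw [Finset.prod_range_succ, ih, Nat.descFactorial_succ]
    rcases lt_or_ge n M with h | h
    · rw [Nat.descFactorial_eq_zero_iff_lt.2 h]; simp
    · rw [Nat.cast_mul, Nat.cast_sub h]; ring

lemma geom_hasSum {r : ℝ} (h0 : 0 ≤ r) (h1 : r < 1) (k : ℕ) :
    HasSum (fun n : ℕ => (1 - r) * r ^ n * (n.choose k : ℝ)) ((r / (1 - r)) ^ k) := by
  have hr1 : (0:ℝ) < 1 - r := by linarith
  have hnorm : ‖r‖ < 1 := by rwa [Real.norm_eq_abs, abs_of_nonneg h0]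
  have h := (hasSum_choose_mul_geometric_of_norm_lt_one k hnorm).mul_left (r ^ k * (1 - r))
  have h' : HasSum (fun n : ℕ => (1 - r) * r ^ (n + k) * (((n + k).choose k : ℝ)))
      ((r / (1 - r)) ^ k) := by
    convert h using 2 with n
    · rfl
    · rw [pow_add]; ring
    · rw [div_pow, pow_succ]; field_simp
  have h2 := (hasSum_nat_add_iff (f := fun n : ℕ => (1 - r) * r ^ n * (n.choose k : ℝ)) k).1 h'
  have hz : ∑ i ∈ Finset.range k, (1 - r) * r ^ i * (i.choose k : ℝ) = 0 := by
    apply Finset.sum_eq_zero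
    intro i hi
    rw [Nat.choose_eq_zero_of_lt (Finset.mem_range.1 hi)]
    simp
  rwa [hz, add_zero] at h2

set_option maxHeartbeats 1000000 in
lemma hasSum_pi_prod : ∀ (m : ℕ) (g : Fin m → ℕ → ℝ) (S : Fin m → ℝ),
    (∀ i n, 0 ≤ g i n) → (∀ i, HasSum (g i) (S i)) →
    HasSum (fun x : Fin m → ℕ => ∏ i, g i (x i)) (∏ i, S i) := by
  intro m
  induction m with
  | zero =>
    intro g S _ _
    simp only [Finset.univ_eq_empty, Finset.prod_empty]
    exact hasSum_single (f := fun _ : Fin 0 → ℕ => (1:ℝ)) default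
      (fun b' hb' => absurd (Subsingleton.elim b' default) hb')
  | succ m ih =>
    intro g S hnn h
    have ihm := ih (fun i => g i.succ) (fun i => S i.succ) (fun i n => hnn i.succ n)
      (fun i => h i.succ)
    have h1 : (fun n => ‖g 0 n‖) = g 0 := funext fun n => Real.norm_of_nonneg (hnn 0 n)
    have h2 : (fun x : Fin m → ℕ => ‖∏ i, g i.succ (x i)‖)
        = fun x : Fin m → ℕ => ∏ i, g i.succ (x i) :=
      funext fun x => Real.norm_of_nonneg (Finset.prod_nonneg fun i _ => hnn i.succ (x i))
    have hsum := Summable.mul_of_nonneg (h 0).summable ihm.summable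
      (Pi.le_def.mpr fun n => hnn 0 n)
      (Pi.le_def.mpr fun x => Finset.prod_nonneg fun i _ => hnn i.succ (x i))
    have key := (h 0).mul ihm hsum
    refine ((Fin.consEquiv (fun _ : Fin (m+1) => ℕ)).hasSum_iff).mp ?_
    convert key using 1
    · rfl
    · funext p
      simp [Fin.consEquiv, Fin.prod_univ_succ]
    · rw [Fin.prod_univ_succ]

lemma choose_sum_piAntidiag {ι : Type*} [DecidableEq ι] (s : Finset ι) (x : ι → ℕ) (M : ℕ) :
    (∑ i ∈ s, x i).choose M = ∑ f ∈ s.piAntidiag M, ∏ i ∈ s, (x i).choose (f i) := by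
  induction s using Finset.cons_induction generalizing M with
  | empty =>
    rcases M with _ | M <;> simp [Finset.piAntidiag_empty]
  | cons a s ha ih =>
    rw [Finset.sum_cons, Nat.add_choose_eq, Finset.piAntidiag_cons ha, Finset.sum_disjiUnion]
    apply Finset.sum_congr rfl
    intro p hp
    rw [Finset.sum_map, ih p.2, Finset.mul_sum]
    apply Finset.sum_congr rfl
    intro f hf
    have hfa : f a = 0 := by
      by_contra hne
      exact ha ((Finset.mem_piAntidiag.1 hf).2 a hne)
    rw [Finset.prod_cons]
    simp only [addRightEmbedding_apply]
    congr 1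
    · simp [hfa]
    · apply Finset.prod_congr rfl
      intro i hi
      have : i ≠ a := fun h => ha (h ▸ hi)
      simp [this]

/-- Falling-factorial moments of a sum of independent geometric random variables:
exact multinomial formula and the upper bound `M! (Σ a_i)^M` with `a_i = r_i/(1-r_i)`. -/
theorem stmt_6 (m : ℕ) (r : Fin m → ℝ) (hr0 : ∀ i, 0 ≤ r i) (hr1 : ∀ i, r i < 1)
    (M : ℕ) :
    (∑' x : Fin m → ℕ,
        (∏ i, (1 - r i) * r i ^ (x i)) * ∏ j ∈ Finset.range M, ((∑ i, (x i : ℝ)) - (j : ℝ)))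
      = ∑ f ∈ Finset.Nat.antidiagonalTuple m M,
          (Nat.multinomial Finset.univ f : ℝ) *
            ∏ i, (Nat.factorial (f i) : ℝ) * (r i / (1 - r i)) ^ (f i) ∧
    (∑ f ∈ Finset.Nat.antidiagonalTuple m M,
        (Nat.multinomial Finset.univ f : ℝ) *
          ∏ i, (Nat.factorial (f i) : ℝ) * (r i / (1 - r i)) ^ (f i))
      ≤ (Nat.factorial M : ℝ) * (∑ i, r i / (1 - r i)) ^ M := by
  have hpos : ∀ i, (0:ℝ) < 1 - r i := fun i => by linarith [hr1 i]
  have ha0 : ∀ i, (0:ℝ) ≤ r i / (1 - r i) := fun i => div_nonneg (hr0 i) (hpos i).le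
  -- HasSum for each multi-index f
  have hF : ∀ f : Fin m → ℕ,
      HasSum (fun x : Fin m → ℕ => ∏ i, ((1 - r i) * r i ^ (x i) * ((x i).choose (f i) : ℝ)))
        (∏ i, (r i / (1 - r i)) ^ (f i)) := by
    intro f
    exact hasSum_pi_prod m (fun i n => (1 - r i) * r i ^ n * (n.choose (f i) : ℝ))
      (fun i => (r i / (1 - r i)) ^ (f i))
      (fun i n => mul_nonneg (mul_nonneg (hpos i).le (pow_nonneg (hr0 i) _)) (Nat.cast_nonneg _))
      (fun i => geom_hasSum (hr0 i) (hr1 i) (f i))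
  -- pointwise rewriting of the summand
  have hpt : ∀ x : Fin m → ℕ,
      (∏ i, (1 - r i) * r i ^ (x i)) * ∏ j ∈ Finset.range M, ((∑ i, (x i : ℝ)) - (j : ℝ))
        = ∑ f ∈ Finset.Nat.antidiagonalTuple m M,
            (M.factorial : ℝ) * ∏ i, ((1 - r i) * r i ^ (x i) * ((x i).choose (f i) : ℝ)) := by
    intro x
    have h1 : (∑ i, (x i : ℝ)) = ((∑ i, x i : ℕ) : ℝ) := by push_cast; rfl
    rw [h1, prod_range_cast_sub, Nat.descFactorial_eq_factorial_mul_choose,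
      choose_sum_piAntidiag Finset.univ x M,
      Finset.piAntidiag_univ_fin_eq_antidiagonalTuple M m]
    push_cast
    rw [Finset.mul_sum, Finset.mul_sum]
    apply Finset.sum_congr rfl
    intro f _
    simp only [Finset.prod_mul_distrib]
    ring
  -- the total HasSum
  have htot : HasSum
      (fun x : Fin m → ℕ =>
        (∏ i, (1 - r i) * r i ^ (x i)) * ∏ j ∈ Finset.range M, ((∑ i, (x i : ℝ)) - (j : ℝ)))
      (∑ f ∈ Finset.Nat.antidiagonalTuple m M,
        (M.factorial : ℝ) * ∏ i, (r i / (1 - r i)) ^ (f i)) := by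
    have := hasSum_sum (f := fun (f : Fin m → ℕ) (x : Fin m → ℕ) =>
        (M.factorial : ℝ) * ∏ i, ((1 - r i) * r i ^ (x i) * ((x i).choose (f i) : ℝ)))
      (s := Finset.Nat.antidiagonalTuple m M)
      (a := fun f => (M.factorial : ℝ) * ∏ i, (r i / (1 - r i)) ^ (f i))
      (fun f _ => (hF f).mul_left _)
    convert this using 1
    funext x
    exact hpt x
  -- RHS simplification
  have hRHS : ∀ f ∈ Finset.Nat.antidiagonalTuple m M,
      (Nat.multinomial Finset.univ f : ℝ) *
          ∏ i, (Nat.factorial (f i) : ℝ) * (r i / (1 - r i)) ^ (f i)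
        = (M.factorial : ℝ) * ∏ i, (r i / (1 - r i)) ^ (f i) := by
    intro f hf
    have hsum : ∑ i, f i = M := (Finset.Nat.mem_antidiagonalTuple.1 hf)
    have hspec := Nat.multinomial_spec Finset.univ f
    rw [hsum] at hspec
    rw [Finset.prod_mul_distrib, ← mul_assoc]
    congr 1
    rw [mul_comm]
    rw [← Nat.cast_prod, ← Nat.cast_mul, hspec]
  constructor
  · rw [htot.tsum_eq]
    exact (Finset.sum_congr rfl hRHS).symm
  · rw [Finset.sum_congr rfl hRHS]
    rw [Finset.sum_pow_eq_sum_piAntidiag Finset.univ (fun i => r i / (1 - r i)) M,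
      Finset.piAntidiag_univ_fin_eq_antidiagonalTuple M m, Finset.mul_sum]
    apply Finset.sum_le_sum
    intro f _
    have h1 : (1:ℝ) ≤ (Nat.multinomial Finset.univ f : ℝ) := by
      exact_mod_cast Nat.one_le_iff_ne_zero.2 (Nat.multinomial_pos _ _).ne'
    have h2 : (0:ℝ) ≤ ∏ i, (r i / (1 - r i)) ^ (f i) :=
      Finset.prod_nonneg fun i _ => pow_nonneg (ha0 i) _
    exact mul_le_mul_of_nonneg_left (le_mul_of_one_le_left h2 h1) (Nat.cast_nonneg _)
end
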